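/- Let n and F be natural numbers, let w, w̃, x, x̃, xl, xu, dl, du : Fin n → ℝ and b, b̃ ∈ ℝ, and suppose that for every k, xl k ≤ x k ≤ xu k and dl k ≤ x̃ k − x k ≤ du k. Let L = (∑ₖ min(w̃ k · dl k, w̃ k · du k)) + (∑ₖ min((w̃ k − w k) · xl k, (w̃ k − w k) · xu k)) + (b̃ − b) and U = (∑ₖ max(w̃ k · dl k, w̃ k · du k)) + (∑ₖ max((w̃ k − w k) · xl k, (w̃ k − w k) · xu k)) + (b̃ − b). Then L − 2^{-(F+1)} ≤ 2^{-F} · (round(2^F · (∑ₖ w̃ k · x̃ k + b̃)) : ℝ) − (∑ₖ w k · x k + b) ≤ U + 2^{-(F+1)}, where round : ℝ → ℤ is rounding to the nearest integer. -/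

import Mathlib

open Finset

lemma mul_mem_min_max (a u l v : ℝ) (h1 : l ≤ u) (h2 : u ≤ v) :
    min (a * l) (a * v) ≤ a * u ∧ a * u ≤ max (a * l) (a * v) := by
  rcases le_total a 0 with ha | ha
  · constructor
    · exact le_trans (min_le_right _ _) (mul_le_mul_of_nonpos_left h2 ha)
    · exact le_trans (mul_le_mul_of_nonpos_left h1 ha) (le_max_left _ _)
  · constructor
    · exact le_trans (min_le_left _ _) (mul_le_mul_of_nonneg_left h1 ha)
    · exact le_trans (mul_le_mul_of_nonneg_left h2 ha) (le_max_right _ _)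

/-- Soundness of the affine transformer (AffTrs) with rounding error
`ξ = 2^{−F−1}`: the QNN pre-activation is computed by scaling by `2^F`,
rounding to the nearest integer, and scaling back. -/
theorem affTrs_sound_with_rounding
    (n F : ℕ) (w wt x xt xl xu dl du : Fin n → ℝ) (b bt : ℝ)
    (hx : ∀ k, xl k ≤ x k ∧ x k ≤ xu k)
    (hd : ∀ k, dl k ≤ xt k - x k ∧ xt k - x k ≤ du k) :
    ((∑ k, min (wt k * dl k) (wt k * du k)) +
        (∑ k, min ((wt k - w k) * xl k) ((wt k - w k) * xu k)) + (bt - b))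
        - (2 : ℝ) ^ (-((F : ℤ) + 1)) ≤
      (2 : ℝ) ^ (-(F : ℤ)) *
          ((round ((2 : ℝ) ^ (F : ℤ) * (∑ k, wt k * xt k + bt)) : ℤ) : ℝ)
        - (∑ k, w k * x k + b) ∧
    (2 : ℝ) ^ (-(F : ℤ)) *
          ((round ((2 : ℝ) ^ (F : ℤ) * (∑ k, wt k * xt k + bt)) : ℤ) : ℝ)
        - (∑ k, w k * x k + b) ≤
      ((∑ k, max (wt k * dl k) (wt k * du k)) +
        (∑ k, max ((wt k - w k) * xl k) ((wt k - w k) * xu k)) + (bt - b))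
        + (2 : ℝ) ^ (-((F : ℤ) + 1)) := by
  set S : ℝ := ∑ k, wt k * xt k + bt with hS
  set T : ℝ := ∑ k, w k * x k + b with hT
  have hround : |(2 : ℝ) ^ (-(F : ℤ)) * ((round ((2 : ℝ) ^ (F : ℤ) * S) : ℤ) : ℝ) - S|
      ≤ (2 : ℝ) ^ (-((F : ℤ) + 1)) := by
    have h2F : (0 : ℝ) < (2 : ℝ) ^ (F : ℤ) := zpow_pos (by norm_num) _
    have key : (2 : ℝ) ^ (-(F : ℤ)) * ((round ((2 : ℝ) ^ (F : ℤ) * S) : ℤ) : ℝ) - S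
        = (2 : ℝ) ^ (-(F : ℤ)) * (((round ((2 : ℝ) ^ (F : ℤ) * S) : ℤ) : ℝ)
          - (2 : ℝ) ^ (F : ℤ) * S) := by
      rw [mul_sub, ← mul_assoc, ← zpow_add₀ (two_ne_zero : (2:ℝ) ≠ 0), neg_add_cancel,
        zpow_zero, one_mul]
    rw [key, abs_mul, abs_of_pos (zpow_pos (by norm_num : (0:ℝ) < 2) _)]
    have h1 : |((round ((2 : ℝ) ^ (F : ℤ) * S) : ℤ) : ℝ) - (2 : ℝ) ^ (F : ℤ) * S|
        ≤ 1 / 2 := by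
      rw [abs_sub_comm]; exact abs_sub_round _
    calc (2 : ℝ) ^ (-(F : ℤ)) * |((round ((2 : ℝ) ^ (F : ℤ) * S) : ℤ) : ℝ)
          - (2 : ℝ) ^ (F : ℤ) * S|
        ≤ (2 : ℝ) ^ (-(F : ℤ)) * (1 / 2) := by
          exact mul_le_mul_of_nonneg_left h1 (le_of_lt (zpow_pos (by norm_num) _))
      _ = (2 : ℝ) ^ (-((F : ℤ) + 1)) := by
          rw [show -((F : ℤ) + 1) = -(F : ℤ) + (-1) by ring,
            zpow_add₀ (two_ne_zero : (2:ℝ) ≠ 0)]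
          norm_num
  rw [abs_le] at hround
  have hST : ((∑ k, min (wt k * dl k) (wt k * du k)) +
      (∑ k, min ((wt k - w k) * xl k) ((wt k - w k) * xu k)) + (bt - b)) ≤ S - T ∧
      S - T ≤ ((∑ k, max (wt k * dl k) (wt k * du k)) +
      (∑ k, max ((wt k - w k) * xl k) ((wt k - w k) * xu k)) + (bt - b)) := by
    have hdecomp : S - T = (∑ k, wt k * (xt k - x k)) + (∑ k, (wt k - w k) * x k)
        + (bt - b) := by
      rw [hS, hT, ← Finset.sum_add_distrib]
      rw [show (∑ k, (wt k * (xt k - x k) + (wt k - w k) * x k)) =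
        ∑ k, (wt k * xt k - w k * x k) from Finset.sum_congr rfl
          (fun k _ => by ring), Finset.sum_sub_distrib]
      ring
    have h1 := fun k => mul_mem_min_max (wt k) (xt k - x k) (dl k) (du k)
      (hd k).1 (hd k).2
    have h2 := fun k => mul_mem_min_max (wt k - w k) (x k) (xl k) (xu k)
      (hx k).1 (hx k).2
    constructor
    · rw [hdecomp]
      gcongr with k _ k _
      exacts [(h1 k).1, (h2 k).1]
    · rw [hdecomp]
      gcongr with k _ k _
      exacts [(h1 k).2, (h2 k).2]
  constructor <;> [skip; skip] <;> nlinarith [hST.1, hST.2, hround.1, hround.2]
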